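/- Let u : 2^E → ℝ be an ordinally concave function on the subsets of a finite set E. For any X ⊆ E with X ∉ D*_u, there exist a positive integer k ≤ |E| and a sequence of distinct subsets Y_0 = X, Y_1, …, Y_k of E such that: (1) Y_i ∉ D*_u for each i ∈ {0,1,…,k−1}; (2) u(Y_0) < u(Y_1) < ⋯ < u(Y_k) and Y_k ∈ D*_u; (3) there is an integer ℓ with 0 ≤ ℓ ≤ k such that (a) for each i ∈ {0,1,…,ℓ−1}, Y_{i+1} = Y_i − x_i + x_i' for some x_i ∈ Y_i \ Y_{i+1} and x_i' ∈ (Y_{i+1} \ Y_i) ∪ {∅}, and (b) for each i ∈ {ℓ,…,k−1}, Y_{i+1} = Y_i + x_i' for some x_i' ∈ Y_{i+1} \ Y_i. -/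

import Mathlib

namespace OrdConc

variable {E : Type*} [DecidableEq E]

/-- Membership of an optional element in a finite set: the extra symbol `∅`
(encoded as `none`) always counts as a member of `S ∪ {∅}`. -/
def mem? (x : Option E) (S : Finset E) : Prop :=
  ∀ a : E, x = some a → a ∈ S

/-- `X − x` (no-op when `x = none`, i.e. the symbol `∅`). -/
def rem (X : Finset E) (x : Option E) : Finset E :=
  x.elim X fun a => X.erase a

/-- `X + x` (no-op when `x = none`, i.e. the symbol `∅`). -/
def add (X : Finset E) (x : Option E) : Finset E :=
  x.elim X fun a => insert a X

/-- `X − x + x'`. -/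
def move (X : Finset E) (x x' : Option E) : Finset E :=
  add (rem X x) x'

/-- Ordinal concavity (Definition 1). -/
def OrdinalConcave (u : Finset E → ℝ) : Prop :=
  ∀ X X' : Finset E, ∀ x ∈ X \ X', ∃ x' : Option E, mem? x' (X' \ X) ∧
    (u X < u (move X (some x) x') ∨
     u X' < u (move X' x' (some x)) ∨
     (u X = u (move X (some x) x') ∧ u X' = u (move X' x' (some x))))

/-- Ordinal weak-concavity (Definition 2). -/
def OrdinalWeakConcave (u : Finset E → ℝ) : Prop :=
  ∀ X X' : Finset E, X ≠ X' → ∃ x x' : Option E, x ≠ x' ∧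
    mem? x (X \ X') ∧ mem? x' (X' \ X) ∧
    (u X < u (move X x x') ∨
     u X' < u (move X' x' x) ∨
     (u X = u (move X x x') ∧ u X' = u (move X' x' x)))

/-- An M♮-convex set (family) of subsets of `E`. -/
def MnatConvex (F : Set (Finset E)) : Prop :=
  ∀ X ∈ F, ∀ X' ∈ F, ∀ x ∈ X \ X', ∃ x' : Option E, mem? x' (X' \ X) ∧
    move X (some x) x' ∈ F ∧ move X' x' (some x) ∈ F

/-- The simultaneous exchange property (†). -/
def Dagger (F : Set (Finset E)) : Prop :=
  ∀ X ∈ F, ∀ X' ∈ F, X ≠ X' → ∃ x x' : Option E, x ≠ x' ∧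
    mem? x (X \ X') ∧ mem? x' (X' \ X) ∧
    move X x x' ∈ F ∧ move X' x' x ∈ F

/-- `D*_u`, the family of global maximizers of `u`. -/
def Dstar (u : Finset E → ℝ) : Set (Finset E) :=
  {X | ∀ Z : Finset E, u Z ≤ u X}

/-- The neighborhood `N(X)`. -/
def Nbhd [Fintype E] (X : Finset E) : Set (Finset E) :=
  {Z | ∃ x x' : Option E, mem? x X ∧ mem? x' (Finset.univ \ X) ∧ Z = move X x x'}

/-- The interval `[X, Y]` in `2^E`. -/
def Interval (X Y : Finset E) : Set (Finset E) :=
  {Z | X ⊆ Z ∧ Z ⊆ Y}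

/-- `C_u(X,Y)`, the maximizers of `u` over the interval `[X,Y]`. -/
def CuI (u : Finset E → ℝ) (X Y : Finset E) : Set (Finset E) :=
  {Z | Z ∈ Interval X Y ∧ ∀ W ∈ Interval X Y, u W ≤ u Z}

/-- `C_u(X)`, the maximizers of `u` among all subsets of `X`. -/
def Cu (u : Finset E → ℝ) (X : Finset E) : Set (Finset E) :=
  {Z | Z ⊆ X ∧ ∀ W ⊆ X, u W ≤ u Z}

/-- Cardinality of the symmetric difference `X Δ Z`. -/
def sdCard (X Z : Finset E) : ℕ := (X \ Z ∪ Z \ X).card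

/-- The strict lexicographic order on `ℝ²`. -/
def lexLt (p q : ℝ × ℝ) : Prop := p.1 < q.1 ∨ (p.1 = q.1 ∧ p.2 < q.2)

/-- The (non-strict) lexicographic order on `ℝ²`. -/
def lexLe (p q : ℝ × ℝ) : Prop := lexLt p q ∨ p = q

lemma sdCard_eq_zero {X Z : Finset E} (h : sdCard X Z = 0) : X = Z := by
  unfold sdCard at h
  rw [Finset.card_eq_zero, Finset.union_eq_empty, Finset.sdiff_eq_empty_iff_subset,
    Finset.sdiff_eq_empty_iff_subset] at h
  exact subset_antisymm h.1 h.2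

lemma sdCard_le [Fintype E] (X Z : Finset E) : sdCard X Z ≤ Fintype.card E :=
  Finset.card_le_card (Finset.subset_univ _)

-- exchange cases
lemma sd1 {X Z : Finset E} {x a : E} (hxX : x ∈ X) (hxZ : x ∉ Z) (haZ : a ∈ Z) (haX : a ∉ X) :
    sdCard (insert a (X.erase x)) Z < sdCard X Z := by
  apply Finset.card_lt_card
  constructor
  · intro e
    simp only [Finset.mem_union, Finset.mem_sdiff, Finset.mem_insert, Finset.mem_erase]
    rintro (⟨(rfl | ⟨hne, heX⟩), heZ⟩ | ⟨heZ, hni⟩)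
    · exact absurd haZ heZ
    · exact Or.inl ⟨heX, heZ⟩
    · exact Or.inr ⟨heZ, fun h => hni (Or.inr ⟨fun hh => hxZ (hh ▸ heZ), h⟩)⟩
  · intro hsub
    have := hsub (by simp [hxX, hxZ] : x ∈ X \ Z ∪ Z \ X)
    simp [hxZ] at this
    exact haX (this ▸ hxX)

lemma sd2 {X Z : Finset E} {x : E} (hxX : x ∈ X) (hxZ : x ∉ Z) :
    sdCard (X.erase x) Z < sdCard X Z := by
  apply Finset.card_lt_card
  constructor
  · intro e
    simp only [Finset.mem_union, Finset.mem_sdiff, Finset.mem_erase]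
    rintro (⟨⟨hne, heX⟩, heZ⟩ | ⟨heZ, hni⟩)
    · exact Or.inl ⟨heX, heZ⟩
    · exact Or.inr ⟨heZ, fun h => hni ⟨fun hh => hxZ (hh ▸ heZ), h⟩⟩
  · intro hsub
    simpa [hxX, hxZ] using hsub (by simp [hxX, hxZ] : x ∈ X \ Z ∪ Z \ X)

lemma sd3 {X Z : Finset E} {x a : E} (hxX : x ∈ X) (hxZ : x ∉ Z) (haZ : a ∈ Z) (haX : a ∉ X) :
    sdCard X (insert x (Z.erase a)) < sdCard X Z := by
  apply Finset.card_lt_card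
  constructor
  · intro e
    simp only [Finset.mem_union, Finset.mem_sdiff, Finset.mem_insert, Finset.mem_erase]
    rintro (⟨heX, hni⟩ | ⟨(rfl | ⟨hne, heZ⟩), heX⟩)
    · exact Or.inl ⟨heX, fun h => hni (Or.inr ⟨fun hh => haX (hh ▸ heX), h⟩)⟩
    · exact absurd hxX heX
    · exact Or.inr ⟨heZ, heX⟩
  · intro hsub
    simpa [hxX, hxZ] using hsub (by simp [hxX, hxZ] : x ∈ X \ Z ∪ Z \ X)

lemma sd4 {X Z : Finset E} {x : E} (hxX : x ∈ X) (hxZ : x ∉ Z) :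
    sdCard X (insert x Z) < sdCard X Z := by
  apply Finset.card_lt_card
  constructor
  · intro e
    simp only [Finset.mem_union, Finset.mem_sdiff, Finset.mem_insert]
    rintro (⟨heX, hni⟩ | ⟨(rfl | heZ), heX⟩)
    · exact Or.inl ⟨heX, fun h => hni (Or.inr h)⟩
    · exact absurd hxX heX
    · exact Or.inr ⟨heZ, heX⟩
  · intro hsub
    simpa [hxX, hxZ] using hsub (by simp [hxX, hxZ] : x ∈ X \ Z ∪ Z \ X)

-- insertion phase: X ⊆ Z, x ∈ Z \ X
lemma sd6 {X Z : Finset E} {x : E} (hxZ : x ∈ Z) (hxX : x ∉ X) :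
    sdCard (insert x X) Z < sdCard X Z := by
  apply Finset.card_lt_card
  constructor
  · intro e
    simp only [Finset.mem_union, Finset.mem_sdiff, Finset.mem_insert]
    rintro (⟨(rfl | heX), heZ⟩ | ⟨heZ, hni⟩)
    · exact absurd hxZ heZ
    · exact Or.inl ⟨heX, heZ⟩
    · exact Or.inr ⟨heZ, fun h => hni (Or.inr h)⟩
  · intro hsub
    simpa [hxX, hxZ] using hsub (by simp [hxZ, hxX] : x ∈ X \ Z ∪ Z \ X)

lemma sd7 {X Z : Finset E} {x : E} (hxZ : x ∈ Z) (hxX : x ∉ X) :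
    sdCard X (Z.erase x) < sdCard X Z := by
  apply Finset.card_lt_card
  constructor
  · intro e
    simp only [Finset.mem_union, Finset.mem_sdiff, Finset.mem_erase]
    rintro (⟨heX, hni⟩ | ⟨⟨hne, heZ⟩, heX⟩)
    · exact Or.inl ⟨heX, fun h => hni ⟨fun hh => hxX (hh ▸ heX), h⟩⟩
    · exact Or.inr ⟨heZ, heX⟩
  · intro hsub
    simpa [hxX, hxZ] using hsub (by simp [hxZ, hxX] : x ∈ X \ Z ∪ Z \ X)

lemma path_aux (u : Finset E → ℝ) (hu : OrdinalConcave u) :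
    ∀ n : ℕ, ∀ X Z : Finset E, Z ∈ Dstar u → sdCard X Z ≤ n →
    ∃ k, k ≤ sdCard X Z ∧ ∃ Y : ℕ → Finset E, Y 0 = X ∧
      (∀ i < k, u (Y i) < u (Y (i+1))) ∧ Y k ∈ Dstar u ∧
      ∃ l, l ≤ k ∧
        (∀ i < l, ∃ xi ∈ Y i \ Y (i+1), ∃ x' : Option E,
          mem? x' (Y (i+1) \ Y i) ∧ Y (i+1) = move (Y i) (some xi) x') ∧
        (∀ i, l ≤ i → i < k → ∃ x' ∈ Y (i+1) \ Y i, Y (i+1) = insert x' (Y i)) ∧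
        (X ⊆ Z → l = 0) := by
  intro n
  induction n with
  | zero =>
    intro X Z hZ hle
    have hXZ : X = Z := sdCard_eq_zero (Nat.le_zero.mp hle)
    exact ⟨0, Nat.zero_le _, fun _ => X, rfl, by omega, hXZ ▸ hZ,
      0, le_rfl, by omega, by omega, fun _ => rfl⟩
  | succ n ih =>
    intro X Z hZ hle
    by_cases h0 : sdCard X Z = 0
    · have hXZ : X = Z := sdCard_eq_zero h0
      exact ⟨0, Nat.zero_le _, fun _ => X, rfl, by omega, hXZ ▸ hZ,
        0, le_rfl, by omega, by omega, fun _ => rfl⟩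
    by_cases hne : (X \ Z).Nonempty
    · -- exchange phase
      obtain ⟨x, hx⟩ := hne
      have hxX : x ∈ X := (Finset.mem_sdiff.mp hx).1
      have hxZ : x ∉ Z := (Finset.mem_sdiff.mp hx).2
      have hnsub : ¬ X ⊆ Z := fun h => hxZ (h hxX)
      obtain ⟨x', hmem, hcase⟩ := hu X Z x hx
      -- sdCard decrease facts
      have hd1 : sdCard (move X (some x) x') Z < sdCard X Z := by
        cases x' with
        | none => exact sd2 hxX hxZ
        | some a =>
          have ha := hmem a rfl
          exact sd1 hxX hxZ (Finset.mem_sdiff.mp ha).1 (Finset.mem_sdiff.mp ha).2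
      have hd2 : sdCard X (move Z x' (some x)) < sdCard X Z := by
        cases x' with
        | none => exact sd4 hxX hxZ
        | some a =>
          have ha := hmem a rfl
          exact sd3 hxX hxZ (Finset.mem_sdiff.mp ha).1 (Finset.mem_sdiff.mp ha).2
      rcases hcase with hlt | hlt | ⟨he1, he2⟩
      · -- u X < u X1 : take a step
        set X1 := move X (some x) x' with hX1
        obtain ⟨k, hk, Y, hY0, hmono, hYk, l, hl, hex, hins, -⟩ :=
          ih X1 Z hZ (by omega)
        refine ⟨k + 1, by omega, fun m => Nat.casesOn m X Y, rfl, ?_, hYk, l + 1, by omega,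
          ?_, ?_, fun h => absurd h hnsub⟩
        · intro i hi
          cases i with
          | zero => simpa [hY0] using hlt
          | succ j => exact hmono j (by omega)
        · intro i hi
          cases i with
          | zero =>
            refine ⟨x, ?_, x', ?_, by simp [hY0, hX1]⟩
            · simp only [Finset.mem_sdiff]
              refine ⟨hxX, ?_⟩
              simp only [hY0]
              cases x' with
              | none => simp [hX1, move, add, rem]
              | some a =>
                have ha := (Finset.mem_sdiff.mp (hmem a rfl)).2
                simp only [hX1, move, add, rem, Option.elim, Finset.mem_insert,
                  Finset.mem_erase, not_or]
                exact ⟨fun h => ha (h ▸ hxX), fun h => h.1 rfl⟩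
            · intro a ha'
              have ha := hmem a ha'
              subst ha'
              simp only [Finset.mem_sdiff, hY0]
              exact ⟨by simp [hX1, move, add, rem], (Finset.mem_sdiff.mp ha).2⟩
          | succ j => exact hex j (by omega)
        · intro i h1 h2
          cases i with
          | zero => omega
          | succ j => exact hins j (by omega) (by omega)
      · -- u Z < u (move Z x' x) : impossible
        exact absurd (hZ (move Z x' (some x))) (not_le.mpr hlt)
      · -- equality: move Z closer
        set Z1 := move Z x' (some x) with hZ1
        have hZ1D : Z1 ∈ Dstar u := fun W => he2 ▸ hZ W
        obtain ⟨k, hk, Y, hY0, hmono, hYk, l, hl, hex, hins, -⟩ :=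
          ih X Z1 hZ1D (by omega)
        exact ⟨k, by omega, Y, hY0, hmono, hYk, l, hl, hex, hins,
          fun h => absurd h hnsub⟩
    · -- insertion phase: X ⊆ Z
      have hXZ : X ⊆ Z := by
        intro e he
        by_contra hc
        exact hne ⟨e, Finset.mem_sdiff.mpr ⟨he, hc⟩⟩
      have hZXne : (Z \ X).Nonempty := by
        rw [Finset.sdiff_nonempty]
        intro h
        exact h0 (by
          have : X = Z := subset_antisymm hXZ h
          simp [this, sdCard])
      obtain ⟨x, hx⟩ := hZXne
      have hxZ : x ∈ Z := (Finset.mem_sdiff.mp hx).1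
      have hxX : x ∉ X := (Finset.mem_sdiff.mp hx).2
      obtain ⟨x', hmem, hcase⟩ := hu Z X x hx
      have hx'n : x' = none := by
        cases x' with
        | none => rfl
        | some a =>
          have ha := hmem a rfl
          exact absurd (hXZ (Finset.mem_sdiff.mp ha).1) (Finset.mem_sdiff.mp ha).2
      subst hx'n
      have hm1 : move Z (some x) none = Z.erase x := rfl
      have hm2 : move X none (some x) = insert x X := rfl
      rw [hm1, hm2] at hcase
      rcases hcase with hlt | hlt | ⟨he1, he2⟩
      · exact absurd (hZ (Z.erase x)) (not_le.mpr hlt)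
      · -- u X < u (insert x X)
        have hd : sdCard (insert x X) Z < sdCard X Z := sd6 hxZ hxX
        set X1 := insert x X with hX1
        have hX1Z : X1 ⊆ Z := Finset.insert_subset hxZ hXZ
        obtain ⟨k, hk, Y, hY0, hmono, hYk, l, hl, hex, hins, hl0⟩ :=
          ih X1 Z hZ (by omega)
        have hl0' : l = 0 := hl0 hX1Z
        subst hl0'
        refine ⟨k + 1, by omega, fun m => Nat.casesOn m X Y, rfl,
          ?_, hYk, 0, by omega, by omega, ?_, fun _ => rfl⟩
        · intro i hi
          cases i with
          | zero => simpa [hY0] using hlt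
          | succ j => exact hmono j (by omega)
        · intro i h1 h2
          cases i with
          | zero =>
            refine ⟨x, ?_, by simp [hY0, hX1]⟩
            simp [hY0, hX1, hxX]
          | succ j => exact hins j (by omega) (by omega)
      · -- u Z = u (Z.erase x)
        have hd : sdCard X (Z.erase x) < sdCard X Z := sd7 hxZ hxX
        set Z1 := Z.erase x with hZ1
        have hZ1D : Z1 ∈ Dstar u := fun W => he1 ▸ hZ W
        have hXZ1 : X ⊆ Z1 := fun e he =>
          Finset.mem_erase.mpr ⟨fun h => hxX (h ▸ he), hXZ he⟩
        obtain ⟨k, hk, Y, hY0, hmono, hYk, l, hl, hex, hins, hl0⟩ :=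
          ih X Z1 hZ1D (by omega)
        exact ⟨k, by omega, Y, hY0, hmono, hYk, l, hl, hex, hins,
          fun _ => hl0 hXZ1⟩

theorem exists_increasing_path_to_maximizer_ordConcave
    {E : Type*} [DecidableEq E] [Fintype E]
    (u : Finset E → ℝ) (hu : OrdinalConcave u)
    (X : Finset E) (hX : X ∉ Dstar u) :
    ∃ k : ℕ, 0 < k ∧ k ≤ Fintype.card E ∧ ∃ Y : ℕ → Finset E,
      Y 0 = X ∧
      (∀ i ≤ k, ∀ j ≤ k, i ≠ j → Y i ≠ Y j) ∧
      (∀ i < k, Y i ∉ Dstar u) ∧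
      (∀ i < k, u (Y i) < u (Y (i + 1))) ∧
      Y k ∈ Dstar u ∧
      (∃ l : ℕ, l ≤ k ∧
        (∀ i < l, ∃ xi ∈ Y i \ Y (i + 1), ∃ x' : Option E,
          mem? x' (Y (i + 1) \ Y i) ∧ Y (i + 1) = move (Y i) (some xi) x') ∧
        (∀ i : ℕ, l ≤ i → i < k →
          ∃ x' ∈ Y (i + 1) \ Y i, Y (i + 1) = insert x' (Y i))) := by
  obtain ⟨Z, -, hZmax⟩ := Finset.exists_max_image (Finset.univ : Finset (Finset E)) u
    ⟨∅, Finset.mem_univ ∅⟩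
  have hZ : Z ∈ Dstar u := fun W => hZmax W (Finset.mem_univ W)
  obtain ⟨k, hk, Y, hY0, hmono, hYk, l, hl, hex, hins, -⟩ :=
    path_aux u hu (sdCard X Z) X Z hZ le_rfl
  have hcard : sdCard X Z ≤ Fintype.card E := Finset.card_le_card (Finset.subset_univ _)
  have hkpos : 0 < k := by
    rcases Nat.eq_zero_or_pos k with h | h
    · exact absurd (by rw [← hY0, ← h]; exact hYk) hX
    · exact h
  have hchain : ∀ j, j ≤ k → ∀ i < j, u (Y i) < u (Y j) := by
    intro j
    induction j with
    | zero => omega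
    | succ m ihm =>
      intro hj i hi
      rcases Nat.lt_succ_iff_lt_or_eq.mp hi with h | h
      · exact (ihm (by omega) i h).trans (hmono m (by omega))
      · exact h ▸ hmono i (by omega)
  refine ⟨k, hkpos, le_trans hk hcard, Y, hY0, ?_, ?_, hmono, hYk, l, hl, hex, hins⟩
  · intro i hi j hj hij
    rcases Nat.lt_or_ge i j with h | h
    · exact fun he => absurd (he ▸ hchain j hj i h) (lt_irrefl _)
    · have h' : j < i := by omega
      exact fun he => absurd (he ▸ hchain i hi j h') (lt_irrefl _)
  · intro i hik hmem
    have h1 := hchain k le_rfl i hik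
    have h2 := hmem (Y k)
    linarith

end OrdConc
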